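/- Let T ⊆ ω^{<ω} be a Laver tree, (Y,e) a compact metric space, and f : [T] → Y a Borel function. Then there is a Laver tree S ⊆ T with the same stem as T such that f restricted to [S] is Lipschitz with constant 2 from the least-difference metric d to e; more precisely, for all branches r_0, r_1 ∈ [S] and every n ∈ ω, if r_0 and r_1 agree on their first n+1 coordinates then e(f(r_0), f(r_1)) ≤ 2^{-n}. -/

import Mathlib

open Set

/-- The initial segment `r ↾ n` of a point of Baire space, as a finite sequence. -/
def seqTake (r : ℕ → ℕ) (n : ℕ) : List ℕ := List.ofFn fun i : Fin n => r i

/-- `[T]`, the set of infinite branches of a tree `T ⊆ ω^{<ω}`. -/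
def branches (T : Set (List ℕ)) : Set (ℕ → ℕ) := {r | ∀ n, seqTake r n ∈ T}

/-- `T` is a Laver tree with stem `s`: `T` is closed under initial segments, `s ∈ T` is
comparable with every element of `T`, and every `t ∈ T` extending `s` has infinitely many
immediate successors in `T`. -/
def IsLaverTreeWithStem (T : Set (List ℕ)) (s : List ℕ) : Prop :=
  s ∈ T ∧ (∀ t ∈ T, ∀ u : List ℕ, u <+: t → u ∈ T) ∧
    (∀ t ∈ T, t <+: s ∨ s <+: t) ∧
    (∀ t ∈ T, s <+: t → {n : ℕ | t ++ [n] ∈ T}.Infinite)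

namespace LaverAux

@[simp] lemma seqTake_length (r : ℕ → ℕ) (n : ℕ) : (seqTake r n).length = n :=
  List.length_ofFn

lemma seqTake_getElem (r : ℕ → ℕ) {n i : ℕ} (h : i < (seqTake r n).length) :
    (seqTake r n)[i] = r i := by
  simp [seqTake]

lemma seqTake_prefix (r : ℕ → ℕ) {m n : ℕ} (h : m ≤ n) :
    seqTake r m <+: seqTake r n := by
  rw [List.prefix_iff_eq_take]
  apply List.ext_getElem
  · simp [Nat.min_eq_left h]
  · intro i h1 h2
    rw [List.getElem_take, seqTake_getElem, seqTake_getElem]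

lemma seqTake_eq_of_agree {r r' : ℕ → ℕ} {n : ℕ} (h : ∀ i < n, r i = r' i) :
    seqTake r n = seqTake r' n := by
  unfold seqTake
  rw [List.ofFn_inj]
  funext i
  exact h i i.2

lemma eq_seqTake_of_prefix {u : List ℕ} {r : ℕ → ℕ} {n : ℕ} (h : u <+: seqTake r n) :
    u = seqTake r u.length := by
  have h1 : u.length ≤ n := by simpa using h.length_le
  have h2 := seqTake_prefix r h1
  exact (List.prefix_of_prefix_length_le h h2 (by simp)).eq_of_length (by simp)

/-- comparable lists of equal length are equal -/
lemma eq_of_comparable_length {u v : List ℕ} (h : u <+: v ∨ v <+: u)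
    (hl : u.length = v.length) : u = v := by
  rcases h with h | h
  · exact h.eq_of_length hl
  · exact (h.eq_of_length hl.symm).symm

lemma prefix_comm_of_prefix {u v w : List ℕ} (hu : u <+: w) (hv : v <+: w) :
    u <+: v ∨ v <+: u := by
  rcases le_total u.length v.length with h | h
  · exact Or.inl (List.prefix_of_prefix_length_le hu hv h)
  · exact Or.inr (List.prefix_of_prefix_length_le hv hu h)

/-- The subtree of `T` of nodes comparable with `t`. -/
def subt (T : Set (List ℕ)) (t : List ℕ) : Set (List ℕ) :=
  {u ∈ T | u <+: t ∨ t <+: u}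

lemma subt_subset (T : Set (List ℕ)) (t : List ℕ) : subt T t ⊆ T :=
  fun _ h => h.1

lemma subt_laver {T : Set (List ℕ)} {s t : List ℕ} (hT : IsLaverTreeWithStem T s)
    (ht : t ∈ T) (hst : s <+: t) : IsLaverTreeWithStem (subt T t) t := by
  obtain ⟨hs, hcl, hcomp, hsplit⟩ := hT
  refine ⟨⟨ht, Or.inl List.prefix_rfl⟩, ?_, fun u hu => hu.2, ?_⟩
  · rintro u ⟨huT, hu⟩ w hw
    refine ⟨hcl u huT w hw, ?_⟩
    rcases hu with hu | hu
    · exact Or.inl (hw.trans hu)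
    · exact prefix_comm_of_prefix hw hu
  · rintro u ⟨huT, -⟩ htu
    have := hsplit u huT (hst.trans htu)
    refine this.mono fun k hk => ⟨hk, Or.inr (htu.trans (List.prefix_append _ _))⟩

lemma branches_mono {S T : Set (List ℕ)} (h : S ⊆ T) : branches S ⊆ branches T :=
  fun _ hr n => h (hr n)

lemma seqTake_mem_of_branch {S : Set (List ℕ)} {r : ℕ → ℕ} (hr : r ∈ branches S) (n : ℕ) :
    seqTake r n ∈ S := hr n

/-- a node of a Laver tree at least as long as the stem extends the stem -/
lemma stem_prefix {T : Set (List ℕ)} {s t : List ℕ} (hT : IsLaverTreeWithStem T s)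
    (ht : t ∈ T) (hl : s.length ≤ t.length) : s <+: t := by
  rcases hT.2.2.1 t ht with h | h
  · exact (h.eq_of_length (le_antisymm h.length_le hl)).symm ▸ List.prefix_rfl
  · exact h

/-- every Laver tree has a branch through its stem -/
lemma exists_branch {S : Set (List ℕ)} {t : List ℕ} (hS : IsLaverTreeWithStem S t) :
    ∃ r ∈ branches S, seqTake r t.length = t := by
  classical
  obtain ⟨hts, hcl, hcomp, hsplit⟩ := hS
  let ext1 : List ℕ → List ℕ := fun u =>
    if h : {n | u ++ [n] ∈ S}.Infinite then u ++ [h.nonempty.choose] else u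
  let c : ℕ → List ℕ := fun n => Nat.rec t (fun _ u => ext1 u) n
  have hinv : ∀ n, c n ∈ S ∧ t <+: c n ∧ (c n).length = t.length + n := by
    intro n
    induction n with
    | zero => exact ⟨hts, List.prefix_rfl, rfl⟩
    | succ n ih =>
      obtain ⟨h1, h2, h3⟩ := ih
      have hinf : {k | c n ++ [k] ∈ S}.Infinite := hsplit _ h1 h2
      have : c (n+1) = c n ++ [hinf.nonempty.choose] := by
        show ext1 (c n) = _
        simp [ext1, hinf]
      refine ⟨?_, ?_, ?_⟩
      · rw [this]; exact hinf.nonempty.choose_spec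
      · rw [this]; exact h2.trans (List.prefix_append _ _)
      · rw [this]; simp [h3]; omega
  have hchain : ∀ m n, m ≤ n → c m <+: c n := by
    intro m n h
    induction n with
    | zero => simp_all
    | succ n ih =>
      rcases Nat.lt_or_ge m (n+1) with h' | h'
      · refine (ih (by omega)).trans ?_
        show c n <+: ext1 (c n)
        by_cases hc : {k | c n ++ [k] ∈ S}.Infinite
        · simp only [ext1, dif_pos hc]; exact List.prefix_append _ _
        · simp only [ext1, dif_neg hc]; exact List.prefix_rfl
      · have : m = n + 1 := by omega
        subst this; exact List.prefix_rfl
  refine ⟨fun i => (c (i+1)).getD i 0, ?_, ?_⟩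
  · intro n
    have key : seqTake (fun i => (c (i+1)).getD i 0) n = (c n).take n := by
      apply List.ext_getElem
      · simp [(hinv n).2.2]
      · intro i h1 h2
        rw [List.getElem_take, seqTake_getElem]
        have hi1 : i < (c (i+1)).length := by rw [(hinv (i+1)).2.2]; omega
        rw [List.getD_eq_getElem _ _ hi1]
        have : i < n := by simpa using h1
        exact (hchain (i+1) n this).getElem hi1
    rw [key]
    exact hcl _ (hinv n).1 _ (List.take_prefix _ _)
  · have key : seqTake (fun i => (c (i+1)).getD i 0) t.length = (c t.length).take t.length := by
      apply List.ext_getElem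
      · simp [(hinv t.length).2.2]
      · intro i h1 h2
        rw [List.getElem_take, seqTake_getElem]
        have hi1 : i < (c (i+1)).length := by rw [(hinv (i+1)).2.2]; omega
        rw [List.getD_eq_getElem _ _ hi1]
        have : i < t.length := by simpa using h1
        exact (hchain (i+1) t.length this).getElem hi1
    rw [key]
    have := (hinv t.length).2.1
    rw [List.prefix_iff_eq_take] at this
    exact this.symm

end LaverAux

def RamseyD (A : Set (ℕ → ℕ)) : Prop :=
  ∀ T s, IsLaverTreeWithStem T s →
    ∃ S t, IsLaverTreeWithStem S t ∧ S ⊆ T ∧ (branches S ⊆ A ∨ branches S ⊆ Aᶜ)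

def PRamsey (A : Set (ℕ → ℕ)) : Prop :=
  ∀ T s, IsLaverTreeWithStem T s →
    ∃ S, IsLaverTreeWithStem S s ∧ S ⊆ T ∧ (branches S ⊆ A ∨ branches S ⊆ Aᶜ)

/-- Gluing a family of Laver trees with stems `t ++ [k]`, `k ∈ I`, into one with stem `t`. -/
lemma glue {t : List ℕ} {I : Set ℕ} (hI : I.Infinite) {Sf : ℕ → Set (List ℕ)}
    (hSf : ∀ k ∈ I, IsLaverTreeWithStem (Sf k) (t ++ [k])) :
    IsLaverTreeWithStem ({v | v <+: t} ∪ ⋃ k ∈ I, Sf k) t ∧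
    (∀ r ∈ branches ({v | v <+: t} ∪ ⋃ k ∈ I, Sf k), ∃ k ∈ I, r ∈ branches (Sf k)) ∧
    (∀ u ∈ ({v | v <+: t} ∪ ⋃ k ∈ I, Sf k), u <+: t ∨ ∃ k ∈ I, u ∈ Sf k ∧ t ++ [k] <+: u) := by
  set GS := {v | v <+: t} ∪ ⋃ k ∈ I, Sf k with hGS
  have hmem : ∀ u ∈ GS, u <+: t ∨ ∃ k ∈ I, u ∈ Sf k ∧ t ++ [k] <+: u := by
    rintro u (hu | hu)
    · exact Or.inl hu
    · simp only [mem_iUnion] at hu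
      obtain ⟨k, hkI, hk⟩ := hu
      rcases (hSf k hkI).2.2.1 u hk with h | h
      · rcases Nat.lt_or_ge u.length (t ++ [k]).length with h' | h'
        · left
          exact List.prefix_of_prefix_length_le h (List.prefix_append _ _) (by simp only [List.length_append, List.length_singleton] at h' ⊢; omega)
        · right
          exact ⟨k, hkI, hk, (h.eq_of_length (le_antisymm h.length_le h')).symm ▸ List.prefix_rfl⟩
      · exact Or.inr ⟨k, hkI, hk, h⟩
  have hLav : IsLaverTreeWithStem GS t := by
    refine ⟨Or.inl List.prefix_rfl, ?_, ?_, ?_⟩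
    · rintro u (hu | hu) w hw
      · exact Or.inl (hw.trans hu)
      · simp only [mem_iUnion] at hu
        obtain ⟨k, hkI, hk⟩ := hu
        right
        simp only [mem_iUnion]
        exact ⟨k, hkI, (hSf k hkI).2.1 u hk w hw⟩
    · intro u hu
      rcases hmem u hu with h | ⟨k, hkI, hk, h⟩
      · exact Or.inl h
      · exact Or.inr ((List.prefix_append _ _).trans h)
    · intro u hu htu
      by_cases hut : u = t
      · subst hut
        refine hI.mono fun k hk => ?_
        right
        simp only [mem_iUnion]
        exact ⟨k, hk, (hSf k hk).1⟩
      · rcases hmem u hu with h | ⟨k, hkI, hk, h⟩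
        · exact absurd (htu.eq_of_length (le_antisymm htu.length_le h.length_le)).symm hut
        · have := (hSf k hkI).2.2.2 u hk h
          refine this.mono fun m hm => ?_
          right
          simp only [mem_iUnion]
          exact ⟨k, hkI, hm⟩
  refine ⟨hLav, ?_, hmem⟩
  intro r hr
  have hv := hr (t.length + 1)
  rcases hmem _ hv with h | ⟨k, hkI, hk, h⟩
  · exact absurd h.length_le (by simp)
  · have hveq : seqTake r (t.length + 1) = t ++ [k] :=
      LaverAux.eq_of_comparable_length (Or.inr h) (by simp)
    refine ⟨k, hkI, fun n => ?_⟩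
    rcases le_or_gt n (t.length + 1) with hn | hn
    · exact (hSf k hkI).2.1 _ hk _ (LaverAux.seqTake_prefix r hn)
    · have hw := hr n
      rcases hmem _ hw with h' | ⟨k', hk'I, hk', h'⟩
      · exact absurd h'.length_le (by simp; omega)
      · have h2 : t ++ [k'] = seqTake r (t ++ [k']).length := LaverAux.eq_seqTake_of_prefix h'
        rw [show (t ++ [k']).length = t.length + 1 by simp, hveq] at h2
        have : k' = k := by simpa using h2
        subst this
        exact hk'
  
/-- Pure decision: stem-free Ramsey property implies same-stem Ramsey property. -/
lemma pureDecision {A : Set (ℕ → ℕ)} (hA : RamseyD A) : PRamsey A := by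
  intro T s hT
  set Good : List ℕ → Prop := fun t =>
    ∃ S, IsLaverTreeWithStem S t ∧ S ⊆ LaverAux.subt T t ∧
      (branches S ⊆ A ∨ branches S ⊆ Aᶜ) with hGood
  suffices hs : Good s by
    obtain ⟨S, h1, h2, h3⟩ := hs
    exact ⟨S, h1, h2.trans (LaverAux.subt_subset _ _), h3⟩
  by_contra hBad
  -- the successor lemma
  have succ : ∀ t ∈ T, s <+: t → ¬ Good t →
      {k | t ++ [k] ∈ T ∧ ¬ Good (t ++ [k])}.Infinite := by
    intro t htT hst hbad
    by_contra hfin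
    rw [Set.not_infinite] at hfin
    have hK : {k | t ++ [k] ∈ T}.Infinite := hT.2.2.2 t htT hst
    have hgood : {k | t ++ [k] ∈ T ∧ Good (t ++ [k])}.Infinite := by
      refine (hK.diff hfin).mono ?_
      rintro k ⟨hk1, hk2⟩
      simp only [mem_setOf_eq, not_and] at hk2
      exact ⟨hk1, by_contra fun h => (hk2 hk1) h⟩
    -- split by side
    have hsplit2 : {k | t ++ [k] ∈ T ∧ ∃ S, IsLaverTreeWithStem S (t ++ [k]) ∧
          S ⊆ LaverAux.subt T (t ++ [k]) ∧ branches S ⊆ A}.Infinite ∨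
        {k | t ++ [k] ∈ T ∧ ∃ S, IsLaverTreeWithStem S (t ++ [k]) ∧
          S ⊆ LaverAux.subt T (t ++ [k]) ∧ branches S ⊆ Aᶜ}.Infinite := by
      rw [← Set.infinite_union]
      refine hgood.mono ?_
      rintro k ⟨hk1, S, hS1, hS2, hS3 | hS3⟩
      · exact Or.inl ⟨hk1, S, hS1, hS2, hS3⟩
      · exact Or.inr ⟨hk1, S, hS1, hS2, hS3⟩
    -- symmetric claim
    have claim : ∀ Z : Set (ℕ → ℕ),
        {k | t ++ [k] ∈ T ∧ ∃ S, IsLaverTreeWithStem S (t ++ [k]) ∧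
          S ⊆ LaverAux.subt T (t ++ [k]) ∧ branches S ⊆ Z}.Infinite →
        ∃ S, IsLaverTreeWithStem S t ∧ S ⊆ LaverAux.subt T t ∧ branches S ⊆ Z := by
      intro Z hI
      classical
      set I := {k | t ++ [k] ∈ T ∧ ∃ S, IsLaverTreeWithStem S (t ++ [k]) ∧
          S ⊆ LaverAux.subt T (t ++ [k]) ∧ branches S ⊆ Z} with hIdef
      have hex : ∀ k, ∃ S, k ∈ I → IsLaverTreeWithStem S (t ++ [k]) ∧
          S ⊆ LaverAux.subt T (t ++ [k]) ∧ branches S ⊆ Z := by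
        intro k
        by_cases hk : k ∈ I
        · obtain ⟨-, S, hS⟩ := hk
          exact ⟨S, fun _ => hS⟩
        · exact ⟨∅, fun h => absurd h hk⟩
      choose Sf hSf using hex
      obtain ⟨hLav, hbr, hmem⟩ := glue hI (Sf := Sf) (fun k hk => (hSf k hk).1)
      refine ⟨_, hLav, ?_, ?_⟩
      · rintro u hu
        rcases hmem u hu with h | ⟨k, hkI, hk, h⟩
        · exact ⟨hT.2.1 t htT u h, Or.inl h⟩
        · have := (hSf k hkI).2.1 hk
          exact ⟨this.1, Or.inr ((List.prefix_append _ _).trans h)⟩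
      · intro r hr
        obtain ⟨k, hkI, hk⟩ := hbr r hr
        exact (hSf k hkI).2.2 hk
    apply hbad
    rcases hsplit2 with h | h
    · obtain ⟨S, h1, h2, h3⟩ := claim A h
      exact ⟨S, h1, h2, Or.inl h3⟩
    · obtain ⟨S, h1, h2, h3⟩ := claim Aᶜ h
      exact ⟨S, h1, h2, Or.inr h3⟩
  -- the bad tree
  set B : Set (List ℕ) := {v | v <+: s} ∪
      {t | t ∈ T ∧ s <+: t ∧ ∀ w, s <+: w → w <+: t → ¬ Good w} with hBdef
  have hsB : s ∈ B := by
    right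
    refine ⟨hT.1, List.prefix_rfl, fun w h1 h2 => ?_⟩
    rwa [h1.eq_of_length (le_antisymm h1.length_le h2.length_le)] at hBad
  have hright : ∀ t ∈ B, s <+: t →
      t ∈ T ∧ s <+: t ∧ ∀ w, s <+: w → w <+: t → ¬ Good w := by
    rintro t (ht | ht) hst
    · have : t = s := ht.eq_of_length (le_antisymm ht.length_le hst.length_le)
      subst this
      rcases hsB with h | h
      · exact ⟨hT.1, List.prefix_rfl, fun w h1 h2 => by
          rwa [h1.eq_of_length (le_antisymm h1.length_le h2.length_le)] at hBad⟩
      · exact h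
    · exact ht
  have hBsubT : B ⊆ T := by
    rintro u (hu | hu)
    · exact hT.2.1 s hT.1 u hu
    · exact hu.1
  have hBLav : IsLaverTreeWithStem B s := by
    refine ⟨hsB, ?_, ?_, ?_⟩
    · rintro u (hu | hu) w hw
      · exact Or.inl (hw.trans hu)
      · rcases LaverAux.prefix_comm_of_prefix hw hu.2.1 with h | h
        · exact Or.inl h
        · exact Or.inr ⟨hT.2.1 u hu.1 w hw, h, fun w' h1 h2 => hu.2.2 w' h1 (h2.trans hw)⟩
    · rintro u (hu | hu)
      · exact Or.inl hu
      · exact Or.inr hu.2.1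
    · intro u huB hsu
      obtain ⟨huT, -, hubad⟩ := hright u huB hsu
      have := succ u huT hsu (hubad u hsu List.prefix_rfl)
      refine this.mono ?_
      rintro k ⟨hk1, hk2⟩
      right
      refine ⟨hk1, hsu.trans (List.prefix_append _ _), fun w h1 h2 => ?_⟩
      rcases le_or_gt w.length u.length with h' | h'
      · exact hubad w h1 (List.prefix_of_prefix_length_le h2 (List.prefix_append _ _) h')
      · have : w = u ++ [k] := h2.eq_of_length (le_antisymm h2.length_le (by simp; omega))
        rwa [this]
  obtain ⟨S, t', hS, hSB, hside⟩ := hA B s hBLav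
  have ht'B : t' ∈ B := hSB hS.1
  rcases hBLav.2.2.1 t' ht'B with hcase | hcase
  · -- t' <+: s ; then s ∈ S, shrink to stem s
    obtain ⟨r, hr, -⟩ := LaverAux.exists_branch hS
    have hvS : seqTake r s.length ∈ S := hr s.length
    have hvB : seqTake r s.length ∈ B := hSB hvS
    have hvs : seqTake r s.length = s := by
      rcases hBLav.2.2.1 _ hvB with h | h
      · exact h.eq_of_length (by simp)
      · exact (h.eq_of_length (by simp)).symm
    rw [hvs] at hvS
    have hS' := LaverAux.subt_laver hS hvS hcase
    apply hBad
    refine ⟨LaverAux.subt S s, hS', ?_, ?_⟩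
    · rintro u ⟨huS, hcomp⟩
      exact ⟨hBsubT (hSB huS), hcomp⟩
    · have hsub : branches (LaverAux.subt S s) ⊆ branches S :=
        LaverAux.branches_mono (LaverAux.subt_subset _ _)
      rcases hside with h | h
      · exact Or.inl (hsub.trans h)
      · exact Or.inr (hsub.trans h)
  · -- s <+: t' : contradiction with badness of t'
    obtain ⟨-, -, hbadw⟩ := hright t' ht'B hcase
    refine hbadw t' hcase List.prefix_rfl ⟨S, hS, ?_, hside⟩
    intro u huS
    exact ⟨hBsubT (hSB huS), hS.2.2.1 u huS⟩

/-- Generic fusion lemma for Laver trees. -/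
lemma fusion {T : Set (List ℕ)} {s : List ℕ} (hT : IsLaverTreeWithStem T s)
    (Q : ℕ → Set (ℕ → ℕ) → Prop)
    (hmono : ∀ n (B B' : Set (ℕ → ℕ)), B ⊆ B' → Q n B' → Q n B)
    (hstep : ∀ U t n, IsLaverTreeWithStem U s → U ⊆ T → t ∈ U →
      t.length = s.length + n + 1 →
      ∃ S, IsLaverTreeWithStem S t ∧ S ⊆ LaverAux.subt U t ∧ Q n (branches S)) :
    ∃ S, IsLaverTreeWithStem S s ∧ S ⊆ T ∧
      ∀ n, ∀ r ∈ branches S,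
        Q n {r' ∈ branches S | seqTake r' (s.length + n + 1) = seqTake r (s.length + n + 1)} := by
  classical
  set pick : ℕ → Set (List ℕ) → List ℕ → Set (List ℕ) := fun n U t =>
    if h : ∃ S, IsLaverTreeWithStem S t ∧ S ⊆ LaverAux.subt U t ∧ Q n (branches S)
    then h.choose else ∅ with hpickdef
  have hpick : ∀ n U t, (∃ S, IsLaverTreeWithStem S t ∧ S ⊆ LaverAux.subt U t ∧
      Q n (branches S)) →
      IsLaverTreeWithStem (pick n U t) t ∧ pick n U t ⊆ LaverAux.subt U t ∧
        Q n (branches (pick n U t)) := by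
    intro n U t h
    rw [hpickdef]
    simp only [dif_pos h]
    exact h.choose_spec
  set next : ℕ → Set (List ℕ) → Set (List ℕ) := fun n U =>
    {u ∈ U | u.length ≤ s.length + n + 1} ∪
      ⋃ t ∈ {t ∈ U | t.length = s.length + n + 1}, pick n U t with hnextdef
  -- the step lemma
  have stepLem : ∀ n U, IsLaverTreeWithStem U s → U ⊆ T →
      IsLaverTreeWithStem (next n U) s ∧ next n U ⊆ U ∧
      (∀ u : List ℕ, u.length ≤ s.length + n + 1 → (u ∈ next n U ↔ u ∈ U)) ∧
      (∀ r ∈ branches (next n U),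
        r ∈ branches (pick n U (seqTake r (s.length + n + 1))) ∧
        Q n (branches (pick n U (seqTake r (s.length + n + 1))))) := by
    intro n U hU hUT
    set L := s.length + n + 1 with hL
    have hexist : ∀ t ∈ U, t.length = L → ∃ S, IsLaverTreeWithStem S t ∧
        S ⊆ LaverAux.subt U t ∧ Q n (branches S) := fun t ht hl => hstep U t n hU hUT ht hl
    have hgood : ∀ t ∈ U, t.length = L →
        IsLaverTreeWithStem (pick n U t) t ∧ pick n U t ⊆ LaverAux.subt U t ∧
          Q n (branches (pick n U t)) := fun t ht hl => hpick n U t (hexist t ht hl)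
    have hmemnext : ∀ u, u ∈ next n U ↔
        (u ∈ U ∧ u.length ≤ L) ∨ ∃ t, (t ∈ U ∧ t.length = L) ∧ u ∈ pick n U t := by
      intro u
      simp only [hnextdef, mem_union, mem_setOf_eq, mem_iUnion, exists_prop, hL]
    have hsubU : next n U ⊆ U := by
      intro u hu
      rcases (hmemnext u).1 hu with ⟨h, -⟩ | ⟨t, ⟨htU, htL⟩, h⟩
      · exact h
      · exact ((hgood t htU htL).2.1 h).1
    have hlevel : ∀ u : List ℕ, u.length ≤ L → (u ∈ next n U ↔ u ∈ U) := by
      intro u hu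
      constructor
      · exact fun h => hsubU h
      · intro h
        exact (hmemnext u).2 (Or.inl ⟨h, hu⟩)
    have hLav : IsLaverTreeWithStem (next n U) s := by
      refine ⟨(hlevel s (by omega)).2 hU.1, ?_, fun u hu => hU.2.2.1 u (hsubU hu), ?_⟩
      · intro u hu w hw
        rcases (hmemnext u).1 hu with ⟨h, hlen⟩ | ⟨t, ⟨htU, htL⟩, h⟩
        · exact (hmemnext w).2 (Or.inl ⟨hU.2.1 u h w hw, le_trans hw.length_le hlen⟩)
        · exact (hmemnext w).2 (Or.inr ⟨t, ⟨htU, htL⟩, (hgood t htU htL).1.2.1 u h w hw⟩)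
      · intro u hu hsu
        have huU : u ∈ U := hsubU hu
        rcases lt_trichotomy u.length L with hlt | heq | hgt
        · refine (hU.2.2.2 u huU hsu).mono fun k hk => ?_
          exact (hmemnext _).2 (Or.inl ⟨hk, by simp; omega⟩)
        · -- u is at level L; it is the stem of its own pick tree
          have hg := hgood u huU heq
          have humem : u ∈ pick n U u := hg.1.1
          refine (hg.1.2.2.2 u humem List.prefix_rfl).mono fun k hk => ?_
          exact (hmemnext _).2 (Or.inr ⟨u, ⟨huU, heq⟩, hk⟩)
        · rcases (hmemnext u).1 hu with ⟨-, hlen⟩ | ⟨t, ⟨htU, htL⟩, h⟩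
          · omega
          · have hg := hgood t htU htL
            have htu : t <+: u := LaverAux.stem_prefix hg.1 h (by omega)
            refine (hg.1.2.2.2 u h htu).mono fun k hk => ?_
            exact (hmemnext _).2 (Or.inr ⟨t, ⟨htU, htL⟩, hk⟩)
    refine ⟨hLav, hsubU, hlevel, ?_⟩
    intro r hr
    have htmem : seqTake r L ∈ next n U := hr L
    have htU : seqTake r L ∈ U := hsubU htmem
    have htL : (seqTake r L).length = L := by simp
    have hg := hgood _ htU htL
    have hbr : r ∈ branches (pick n U (seqTake r L)) := by
      intro m
      rcases le_or_gt m L with hm | hm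
      · exact hg.1.2.1 _ hg.1.1 _ (LaverAux.seqTake_prefix r hm)
      · have hw : seqTake r m ∈ next n U := hr m
        rcases (hmemnext _).1 hw with ⟨-, hlen⟩ | ⟨t', ⟨ht'U, ht'L⟩, h⟩
        · simp at hlen; omega
        · have ht'w : t' <+: seqTake r m := by
            refine LaverAux.stem_prefix (hgood t' ht'U ht'L).1 h ?_
            simp [ht'L]; omega
          have : t' = seqTake r L := by
            have := LaverAux.eq_seqTake_of_prefix ht'w
            rwa [ht'L] at this
          rwa [this] at h
    exact ⟨hbr, hg.2.2⟩
  -- the fusion sequence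
  set Tseq : ℕ → Set (List ℕ) := fun n => Nat.rec T (fun n U => next n U) n with hTseqdef
  have hTseq0 : Tseq 0 = T := rfl
  have hTseqS : ∀ n, Tseq (n + 1) = next n (Tseq n) := fun n => rfl
  have Tinv : ∀ n, IsLaverTreeWithStem (Tseq n) s ∧ Tseq n ⊆ T := by
    intro n
    induction n with
    | zero => exact ⟨hT, le_refl _⟩
    | succ n ih =>
      obtain ⟨h1, h2⟩ := ih
      have := stepLem n (Tseq n) h1 h2
      exact ⟨this.1, this.2.1.trans h2⟩
  have Tdec : ∀ n, Tseq (n + 1) ⊆ Tseq n := by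
    intro n
    exact (stepLem n (Tseq n) (Tinv n).1 (Tinv n).2).2.1
  have Tdec' : ∀ m n, m ≤ n → Tseq n ⊆ Tseq m := by
    intro m n h
    induction n with
    | zero => simp_all
    | succ n ih =>
      rcases lt_or_eq_of_le h with h' | h'
      · exact (Tdec n).trans (ih (by omega))
      · subst h'; exact le_refl _
  have stab2 : ∀ (u : List ℕ) n m, n ≤ m → u.length ≤ s.length + n + 1 →
      (u ∈ Tseq m ↔ u ∈ Tseq n) := by
    intro u n m h hu
    induction m with
    | zero => have : n = 0 := by omega
              subst this; rfl
    | succ m ih =>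
      rcases lt_or_eq_of_le h with h' | h'
      · have hm : n ≤ m := by omega
        rw [← ih hm]
        exact (stepLem m (Tseq m) (Tinv m).1 (Tinv m).2).2.2.1 u (by omega)
      · subst h'; rfl
  set Tlim : Set (List ℕ) := ⋂ n, Tseq n with hTlimdef
  have memlim : ∀ u : List ℕ, u ∈ Tlim ↔ u ∈ Tseq u.length := by
    intro u
    constructor
    · intro h; exact mem_iInter.1 h u.length
    · intro h
      rw [mem_iInter]
      intro m
      rcases le_or_gt m u.length with hm | hm
      · exact Tdec' m u.length hm h
      · exact (stab2 u u.length m (by omega) (by omega)).2 h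
  have hTlimsub : ∀ n, Tlim ⊆ Tseq n := fun n => iInter_subset _ n
  have hTlimLav : IsLaverTreeWithStem Tlim s := by
    refine ⟨?_, ?_, ?_, ?_⟩
    · rw [mem_iInter]; exact fun n => (Tinv n).1.1
    · intro u hu w hw
      rw [mem_iInter]
      intro n
      exact (Tinv n).1.2.1 u (hTlimsub n hu) w hw
    · intro u hu
      exact hT.2.2.1 u (hTlimsub 0 hu)
    · intro u hu hsu
      have hlen : u.length = s.length + (u.length - s.length) := by
        have := hsu.length_le; omega
      set n := u.length - s.length with hn
      have huTn : u ∈ Tseq n := hTlimsub n hu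
      refine ((Tinv n).1.2.2.2 u huTn hsu).mono fun k hk => ?_
      show u ++ [k] ∈ Tlim
      rw [memlim]
      have : (u ++ [k]).length = u.length + 1 := by simp
      rw [this]
      refine (stab2 _ n (u.length + 1) (by omega) (by simp; omega)).2 hk
  refine ⟨Tlim, hTlimLav, hTlimsub 0, ?_⟩
  intro n r hr
  have hloc : ∀ r' : ℕ → ℕ, r' ∈ branches Tlim →
      r' ∈ branches (pick n (Tseq n) (seqTake r' (s.length + n + 1))) ∧
      Q n (branches (pick n (Tseq n) (seqTake r' (s.length + n + 1)))) := by
    intro r' hr'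
    have : r' ∈ branches (next n (Tseq n)) := by
      rw [← hTseqS n]
      exact LaverAux.branches_mono (hTlimsub (n+1)) hr'
    exact (stepLem n (Tseq n) (Tinv n).1 (Tinv n).2).2.2.2 r' this
  refine hmono n _ _ ?_ (hloc r hr).2
  rintro r' ⟨hr'lim, hr'eq⟩
  have := (hloc r' hr'lim).1
  rwa [hr'eq] at this

/-- Sets determined by finite initial segments are Ramsey. -/
lemma ramseyD_basic (U : Set (List ℕ)) : RamseyD {r | ∃ n, seqTake r n ∈ U} := by
  intro T s hT
  by_cases hcase : ∃ t ∈ T, s <+: t ∧ ∃ u, u <+: t ∧ u ∈ U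
  · obtain ⟨t, htT, hst, u, hut, huU⟩ := hcase
    refine ⟨LaverAux.subt T t, t, LaverAux.subt_laver hT htT hst,
      LaverAux.subt_subset _ _, Or.inl ?_⟩
    intro r hr
    have htr : seqTake r t.length = t :=
      LaverAux.eq_of_comparable_length (hr t.length).2 (by simp)
    have : u = seqTake r u.length := LaverAux.eq_seqTake_of_prefix (htr ▸ hut)
    exact ⟨u.length, this ▸ huU⟩
  · refine ⟨T, s, hT, le_refl _, Or.inr ?_⟩
    intro r hr hrA
    obtain ⟨n, hn⟩ := hrA
    have htT : seqTake r (max n s.length) ∈ T := hr (max n s.length)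
    apply hcase
    refine ⟨seqTake r (max n s.length), htT, ?_, seqTake r n,
      LaverAux.seqTake_prefix r (le_max_left _ _), hn⟩
    exact LaverAux.stem_prefix hT htT (by simp)

lemma ramseyD_iUnion {A : ℕ → Set (ℕ → ℕ)} (hA : ∀ n, PRamsey (A n)) :
    RamseyD (⋃ n, A n) := by
  intro T s hT
  by_cases hcase : ∃ t ∈ T, s <+: t ∧ ∃ n, ∃ S, IsLaverTreeWithStem S t ∧
      S ⊆ LaverAux.subt T t ∧ branches S ⊆ A n
  · obtain ⟨t, htT, hst, n, S, h1, h2, h3⟩ := hcase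
    exact ⟨S, t, h1, h2.trans (LaverAux.subt_subset _ _),
      Or.inl (h3.trans (subset_iUnion A n))⟩
  · have hstep : ∀ U t n, IsLaverTreeWithStem U s → U ⊆ T → t ∈ U →
        t.length = s.length + n + 1 →
        ∃ S, IsLaverTreeWithStem S t ∧ S ⊆ LaverAux.subt U t ∧ branches S ⊆ (A n)ᶜ := by
      intro U t n hU hUT htU htL
      have hst : s <+: t := LaverAux.stem_prefix hU htU (by omega)
      have hsubLav := LaverAux.subt_laver hU htU hst
      obtain ⟨S, h1, h2, h3 | h3⟩ := hA n (LaverAux.subt U t) t hsubLav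
      · exfalso
        apply hcase
        refine ⟨t, hUT htU, hst, n, S, h1, ?_, h3⟩
        intro u hu
        obtain ⟨huU, hcomp⟩ := h2 hu
        exact ⟨hUT huU, hcomp⟩
      · exact ⟨S, h1, h2, h3⟩
    obtain ⟨S, h1, h2, h3⟩ := fusion hT (fun n B => B ⊆ (A n)ᶜ)
      (fun n B B' hsub h => hsub.trans h) hstep
    refine ⟨S, s, h1, h2, Or.inr ?_⟩
    intro r hr
    simp only [mem_compl_iff, mem_iUnion, not_exists]
    intro n hn
    exact h3 n r hr ⟨hr, rfl⟩ hn

lemma pramsey_empty : PRamsey (∅ : Set (ℕ → ℕ)) :=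
  fun T _ hT => ⟨T, hT, le_refl _, Or.inr (by simp)⟩

lemma pramsey_compl {A : Set (ℕ → ℕ)} (h : PRamsey A) : PRamsey Aᶜ := by
  intro T s hT
  obtain ⟨S, h1, h2, h3 | h3⟩ := h T s hT
  · exact ⟨S, h1, h2, Or.inr (by simpa using h3)⟩
  · exact ⟨S, h1, h2, Or.inl h3⟩

def laverMS : MeasurableSpace (ℕ → ℕ) where
  MeasurableSet' := PRamsey
  measurableSet_empty := pramsey_empty
  measurableSet_compl := fun _ h => pramsey_compl h
  measurableSet_iUnion := fun _ h => pureDecision (ramseyD_iUnion h)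

lemma pramsey_of_measurableSet {A : Set (ℕ → ℕ)} (hA : MeasurableSet A) : PRamsey A := by
  have hle : (inferInstance : MeasurableSpace (ℕ → ℕ)) ≤ laverMS := by
    have hpi : (inferInstance : MeasurableSpace (ℕ → ℕ)) =
        ⨆ i : ℕ, MeasurableSpace.comap (fun r : ℕ → ℕ => r i) inferInstance := rfl
    rw [hpi]
    refine iSup_le fun i => ?_
    intro B hB
    rw [MeasurableSpace.measurableSet_comap] at hB
    obtain ⟨B', -, rfl⟩ := hB
    show PRamsey _
    apply pureDecision
    have heq : (fun r : ℕ → ℕ => r i) ⁻¹' B' =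
        {r | ∃ n, seqTake r n ∈ {u : List ℕ | u.length = i + 1 ∧ u.getD i 0 ∈ B'}} := by
      ext r
      simp only [mem_preimage, mem_setOf_eq]
      constructor
      · intro h
        refine ⟨i + 1, by simp, ?_⟩
        have hi : i < (seqTake r (i+1)).length := by simp
        rw [List.getD_eq_getElem _ _ hi, LaverAux.seqTake_getElem]
        exact h
      · rintro ⟨n, hlen, hmem⟩
        have hn : n = i + 1 := by simpa using hlen
        subst hn
        have hi : i < (seqTake r (i+1)).length := by simp
        rwa [List.getD_eq_getElem _ _ hi, LaverAux.seqTake_getElem] at hmem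
    rw [heq]
    exact ramseyD_basic _
  exact hle A hA

lemma finCover : ∀ (l : List (Set (ℕ → ℕ))) (T : Set (List ℕ)) (s : List ℕ),
    (∀ A ∈ l, PRamsey A) → IsLaverTreeWithStem T s →
    (∀ r ∈ branches T, ∃ A ∈ l, r ∈ A) →
    ∃ S, IsLaverTreeWithStem S s ∧ S ⊆ T ∧ ∃ A ∈ l, branches S ⊆ A := by
  intro l
  induction l with
  | nil =>
    intro T s hl hT hcov
    obtain ⟨r, hr, -⟩ := LaverAux.exists_branch hT
    obtain ⟨A, hA, -⟩ := hcov r hr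
    simp at hA
  | cons A l ih =>
    intro T s hl hT hcov
    obtain ⟨S₀, h1, h2, h3 | h3⟩ := hl A (List.mem_cons_self) T s hT
    · exact ⟨S₀, h1, h2, A, List.mem_cons_self, h3⟩
    · have hcov' : ∀ r ∈ branches S₀, ∃ B ∈ l, r ∈ B := by
        intro r hr
        obtain ⟨B, hB, hrB⟩ := hcov r (LaverAux.branches_mono h2 hr)
        rcases List.mem_cons.mp hB with rfl | hB
        · exact absurd hrB (h3 hr)
        · exact ⟨B, hB, hrB⟩
      obtain ⟨S, hS1, hS2, A', hA', hsub⟩ :=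
        ih S₀ s (fun B hB => hl B (List.mem_cons_of_mem _ hB)) h1 hcov'
      exact ⟨S, hS1, hS2.trans h2, A', List.mem_cons_of_mem _ hA', hsub⟩

/-- Pure decision for Laver forcing: if `T` is a Laver tree, `(Y, e)` a compact metric
space and `f : [T] → Y` Borel, then there is a Laver tree `S ⊆ T` with the same stem such
that `f ↾ [S]` is Lipschitz with constant `2` from the least-difference metric to `e`:
whenever two branches of `S` agree on their first `n+1` coordinates, their `f`-values are
`2^{-n}`-close. -/
theorem laver_pure_decision
    (T : Set (List ℕ)) (s : List ℕ) (hT : IsLaverTreeWithStem T s)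
    (Y : Type) [MetricSpace Y] [CompactSpace Y] [MeasurableSpace Y] [BorelSpace Y]
    (f : (ℕ → ℕ) → Y) (hf : Measurable ((branches T).restrict f)) :
    ∃ S : Set (List ℕ), IsLaverTreeWithStem S s ∧ S ⊆ T ∧
      ∀ r₀ ∈ branches S, ∀ r₁ ∈ branches S, ∀ n : ℕ,
        (∀ i ≤ n, r₀ i = r₁ i) → dist (f r₀) (f r₁) ≤ (1 / 2 : ℝ) ^ n := by
  classical
  -- Borel preimage packaging
  have hpre : ∀ B : Set Y, MeasurableSet B → ∃ C : Set (ℕ → ℕ), MeasurableSet C ∧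
      ∀ r (hr : r ∈ branches T), (r ∈ C ↔ f r ∈ B) := by
    intro B hB
    have h1 := hf hB
    have h2 : ∃ C, MeasurableSet C ∧ Subtype.val ⁻¹' C = (branches T).restrict f ⁻¹' B :=
      MeasurableSpace.measurableSet_comap.mp h1
    obtain ⟨C, hC, hCeq⟩ := h2
    refine ⟨C, hC, fun r hr => ?_⟩
    have := Set.ext_iff.1 hCeq ⟨r, hr⟩
    simpa [Set.restrict] using this
  -- shrinking into a small ball
  have shrink : ∀ (U : Set (List ℕ)) (t : List ℕ), IsLaverTreeWithStem U t → U ⊆ T →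
      ∀ ε : ℝ, 0 < ε → ∃ S, IsLaverTreeWithStem S t ∧ S ⊆ U ∧
        ∃ y : Y, ∀ r ∈ branches S, f r ∈ Metric.ball y ε := by
    intro U t hU hUT ε hε
    obtain ⟨ys, hys⟩ := IsCompact.elim_finite_subcover (isCompact_univ (X := Y))
      (fun y => Metric.ball y ε) (fun y => Metric.isOpen_ball)
      (fun y _ => mem_iUnion.2 ⟨y, Metric.mem_ball_self hε⟩)
    have hCex : ∀ y : Y, ∃ C : Set (ℕ → ℕ), MeasurableSet C ∧
        ∀ r (hr : r ∈ branches T), (r ∈ C ↔ f r ∈ Metric.ball y ε) :=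
      fun y => hpre _ measurableSet_ball
    choose C hC1 hC2 using hCex
    have hPR : ∀ A ∈ ys.toList.map C, PRamsey A := by
      intro A hA
      obtain ⟨y, -, rfl⟩ := List.mem_map.1 hA
      exact pramsey_of_measurableSet (hC1 y)
    have hcov : ∀ r ∈ branches U, ∃ A ∈ ys.toList.map C, r ∈ A := by
      intro r hr
      have hrT : r ∈ branches T := LaverAux.branches_mono hUT hr
      have hfr : f r ∈ ⋃ y ∈ ys, Metric.ball y ε := hys (mem_univ _)
      simp only [mem_iUnion, exists_prop] at hfr
      obtain ⟨y, hy1, hy2⟩ := hfr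
      exact ⟨C y, List.mem_map_of_mem (f := C) (Finset.mem_toList.2 hy1), (hC2 y r hrT).2 hy2⟩
    obtain ⟨S, h1, h2, A, hA, hsub⟩ := finCover (ys.toList.map C) U t hPR hU hcov
    obtain ⟨y, -, rfl⟩ := List.mem_map.1 hA
    exact ⟨S, h1, h2, y, fun r hr =>
      (hC2 y r (LaverAux.branches_mono (h2.trans hUT) hr)).1 (hsub hr)⟩
  -- stage 0 : shrink at the stem
  obtain ⟨T0, hT0Lav, hT0sub, y0, hy0⟩ :=
    shrink T s hT (le_refl _) ((1/2 : ℝ) ^ s.length) (by positivity)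
  -- fusion
  have hstep : ∀ U t n, IsLaverTreeWithStem U s → U ⊆ T0 → t ∈ U →
      t.length = s.length + n + 1 →
      ∃ S, IsLaverTreeWithStem S t ∧ S ⊆ LaverAux.subt U t ∧
        (∃ y : Y, ∀ r ∈ branches S, f r ∈ Metric.ball y ((1/2 : ℝ) ^ (s.length + n + 1))) := by
    intro U t n hU hUT htU htL
    have hst : s <+: t := LaverAux.stem_prefix hU htU (by omega)
    obtain ⟨S, h1, h2, y, hy⟩ := shrink (LaverAux.subt U t) t
      (LaverAux.subt_laver hU htU hst)
      ((LaverAux.subt_subset U t).trans (hUT.trans hT0sub))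
      ((1/2 : ℝ) ^ (s.length + n + 1)) (by positivity)
    exact ⟨S, h1, h2, y, hy⟩
  obtain ⟨S, hS1, hS2, hS3⟩ := fusion hT0Lav
    (fun n B => ∃ y : Y, ∀ r ∈ B, f r ∈ Metric.ball y ((1/2 : ℝ) ^ (s.length + n + 1)))
    (fun n B B' hsub h => h.imp fun y hy r hr => hy r (hsub hr)) hstep
  refine ⟨S, hS1, hS2.trans hT0sub, ?_⟩
  intro r₀ hr₀ r₁ hr₁ n hagree
  have hagree' : seqTake r₀ (n + 1) = seqTake r₁ (n + 1) :=
    LaverAux.seqTake_eq_of_agree (fun i hi => hagree i (by omega))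
  have key : ∃ (L : ℕ) (y : Y), n + 1 ≤ L ∧
      f r₀ ∈ Metric.ball y ((1/2 : ℝ) ^ L) ∧ f r₁ ∈ Metric.ball y ((1/2 : ℝ) ^ L) := by
    rcases le_or_gt (n + 1) s.length with hcase | hcase
    · exact ⟨s.length, y0, hcase, hy0 r₀ (LaverAux.branches_mono hS2 hr₀),
        hy0 r₁ (LaverAux.branches_mono hS2 hr₁)⟩
    · have hm : s.length + (n - s.length) + 1 = n + 1 := by omega
      obtain ⟨y, hy⟩ := hS3 (n - s.length) r₀ hr₀
      refine ⟨s.length + (n - s.length) + 1, y, by omega, hy r₀ ⟨hr₀, rfl⟩, hy r₁ ⟨hr₁, ?_⟩⟩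
      rw [hm, ← hagree']
  obtain ⟨L, y, hL, h0, h1⟩ := key
  have hd0 : dist (f r₀) y < (1/2 : ℝ) ^ L := by simpa [Metric.mem_ball] using h0
  have hd1 : dist (f r₁) y < (1/2 : ℝ) ^ L := by simpa [Metric.mem_ball] using h1
  have hLn : (1/2 : ℝ) ^ L ≤ (1/2 : ℝ) ^ (n + 1) :=
    pow_le_pow_of_le_one (by norm_num) (by norm_num) hL
  calc dist (f r₀) (f r₁) ≤ dist (f r₀) y + dist (f r₁) y := dist_triangle_right _ _ _
    _ ≤ (1/2 : ℝ) ^ L + (1/2 : ℝ) ^ L := by linarith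
    _ ≤ (1/2 : ℝ) ^ (n + 1) + (1/2 : ℝ) ^ (n + 1) := by linarith
    _ = (1/2 : ℝ) ^ n := by ring
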